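/- arXiv:1510.02628 — 2 statements merged into one kernel-verified Lean document; each statement's English description precedes it below -/
import Mathlib

section
/- (Noncommutative Laurent Phenomenon, qualitative form.) For every integer n ≥ 2, every triangulation Δ of [n], and all distinct i,j ∈ [n], the element x_{ij} of 𝒜_n belongs to the ℚ-subalgebra of 𝒜_n generated by the set {x_{kl} : (k,l) ∈ Δ} ∪ {x_{kl}⁻¹ : (k,l) ∈ Δ}. -/
open scoped Classical

noncomputable section

namespace NCPolygon

/-- Cyclic successor on `Fin n` (the vertices of the `n`-gon in cyclic order). -/
def csucc {n : ℕ} (i : Fin n) : Fin n :=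
  ⟨(i.1 + 1) % n, Nat.mod_lt _ (Nat.lt_of_le_of_lt (Nat.zero_le _) i.isLt)⟩

/-- Cyclic predecessor on `Fin n`. -/
def cpred {n : ℕ} (i : Fin n) : Fin n :=
  ⟨(i.1 + (n - 1)) % n, Nat.mod_lt _ (Nat.lt_of_le_of_lt (Nat.zero_le _) i.isLt)⟩

/-- A list of elements of `Fin n` is *cyclic* if its entries are distinct and some
cyclic rotation of it is strictly increasing. -/
def IsCyclicSeq {n : ℕ} (l : List (Fin n)) : Prop :=
  l.Nodup ∧ ∃ k : ℕ, (l.rotate k).Pairwise (· < ·)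

/-- The pair `(i,k)` crosses `(j,l)` iff `(i,j,k,l)` is cyclic. -/
def Crosses {n : ℕ} (p q : Fin n × Fin n) : Prop :=
  IsCyclicSeq [p.1, q.1, p.2, q.2]

def NonCrossing {n : ℕ} (Δ : Set (Fin n × Fin n)) : Prop :=
  (∀ p ∈ Δ, p.1 ≠ p.2) ∧ ∀ p ∈ Δ, ∀ q ∈ Δ, ¬ Crosses p q

/-- A triangulation of the `n`-gon: a maximal crossing-free set of (directed) chords. -/
def IsTriangulation {n : ℕ} (Δ : Set (Fin n × Fin n)) : Prop :=
  NonCrossing Δ ∧ ∀ Δ' : Set (Fin n × Fin n), NonCrossing Δ' → Δ ⊆ Δ' → Δ' = Δ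

/-! ### The noncommutative polygon algebra `𝒜_n` -/

abbrev OffD (n : ℕ) := {p : Fin n × Fin n // p.1 ≠ p.2}

abbrev AGen (n : ℕ) := OffD n ⊕ OffD n

def xF {n : ℕ} (i j : Fin n) : FreeAlgebra ℚ (AGen n) :=
  if h : i ≠ j then FreeAlgebra.ι ℚ (Sum.inl ⟨(i, j), h⟩) else 1

def xiF {n : ℕ} (i j : Fin n) : FreeAlgebra ℚ (AGen n) :=
  if h : i ≠ j then FreeAlgebra.ι ℚ (Sum.inr ⟨(i, j), h⟩) else 1

/-- The defining relations of `𝒜_n`: invertibility, triangle, and exchange relations. -/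
inductive ARel (n : ℕ) : FreeAlgebra ℚ (AGen n) → FreeAlgebra ℚ (AGen n) → Prop
  | mul_inv {i j : Fin n} (h : i ≠ j) : ARel n (xF i j * xiF i j) 1
  | inv_mul {i j : Fin n} (h : i ≠ j) : ARel n (xiF i j * xF i j) 1
  | triangle {i j k : Fin n} (hij : i ≠ j) (hik : i ≠ k) (hjk : j ≠ k) :
      ARel n (xF i j * xiF k j * xF k i) (xF i k * xiF j k * xF j i)
  | exchange {i j k l : Fin n} (h : IsCyclicSeq [i, j, k, l]) :
      ARel n (xF j l) (xF j k * xiF i k * xF i l + xF j i * xiF k i * xF k l)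

/-- The noncommutative `n`-gon algebra `𝒜_n`. -/
abbrev NCPoly (n : ℕ) := RingQuot (ARel n)

/-- The generator `x_{ij} ∈ 𝒜_n` (junk value `1` when `i = j`). -/
def X {n : ℕ} (i j : Fin n) : NCPoly n :=
  RingQuot.mkAlgHom ℚ (ARel n) (xF i j)

/-- The generator `x_{ij}⁻¹ ∈ 𝒜_n`. -/
def Xinv {n : ℕ} (i j : Fin n) : NCPoly n :=
  RingQuot.mkAlgHom ℚ (ARel n) (xiF i j)

/-- The noncommutative angle `T_i^{jk} = x_{ji}⁻¹ x_{jk} x_{ik}⁻¹ ∈ 𝒜_n`. -/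
def Tang {n : ℕ} (i j k : Fin n) : NCPoly n := Xinv j i * X j k * Xinv i k

/-! ### Triangle groups -/

def tF {n : ℕ} (Δ : Set (Fin n × Fin n)) (i j : Fin n) : FreeGroup Δ :=
  if h : (i, j) ∈ Δ then FreeGroup.of (⟨(i, j), h⟩ : Δ) else 1

/-- The triangle relations of the triangle group `𝕋_Δ`. -/
def triRels {n : ℕ} (Δ : Set (Fin n × Fin n)) : Set (FreeGroup Δ) :=
  { w | ∃ i j k : Fin n, i ≠ j ∧ i ≠ k ∧ j ≠ k ∧
      (i, j) ∈ Δ ∧ (j, i) ∈ Δ ∧ (i, k) ∈ Δ ∧ (k, i) ∈ Δ ∧ (j, k) ∈ Δ ∧ (k, j) ∈ Δ ∧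
      w = tF Δ i j * (tF Δ k j)⁻¹ * tF Δ k i *
        (tF Δ i k * (tF Δ j k)⁻¹ * tF Δ j i)⁻¹ }

/-- The triangle group `𝕋_Δ` of a triangulation `Δ`. -/
abbrev TriGroup {n : ℕ} (Δ : Set (Fin n × Fin n)) := PresentedGroup (triRels Δ)

/-- The generator `t_{ij} ∈ 𝕋_Δ` (junk value `1` when `(i,j) ∉ Δ`). -/
def tG {n : ℕ} (Δ : Set (Fin n × Fin n)) (i j : Fin n) : TriGroup Δ :=
  if h : (i, j) ∈ Δ then PresentedGroup.of (rels := triRels Δ) ⟨(i, j), h⟩ else 1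

/-! ### The big triangle group `𝕋_n` -/

def btF {n : ℕ} (i j : Fin n) : FreeGroup (OffD n) :=
  if h : i ≠ j then FreeGroup.of (⟨(i, j), h⟩ : OffD n) else 1

def bigRels (n : ℕ) : Set (FreeGroup (OffD n)) :=
  { w | ∃ i j k : Fin n, i ≠ j ∧ i ≠ k ∧ j ≠ k ∧
      w = btF i j * (btF k j)⁻¹ * btF k i * (btF i k * (btF j k)⁻¹ * btF j i)⁻¹ }

/-- The big triangle group `𝕋_n`. -/
abbrev BigTriGroup (n : ℕ) := PresentedGroup (bigRels n)

/-- The generator `t_{ij} ∈ 𝕋_n`. -/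
def bigT {n : ℕ} (i j : Fin n) : BigTriGroup n :=
  if h : i ≠ j then PresentedGroup.of (rels := bigRels n) ⟨(i, j), h⟩ else 1

/-! ### Distinguished subalgebras and subgroups -/

/-- `𝒜_Δ`: the subalgebra of `𝒜_n` generated by all `x_{ij}` together with the
`x_{ij}⁻¹` for `(i,j) ∈ Δ`. -/
def ADelta (n : ℕ) (Δ : Set (Fin n × Fin n)) : Subalgebra ℚ (NCPoly n) :=
  Algebra.adjoin ℚ
    ({a | ∃ i j : Fin n, i ≠ j ∧ a = X i j} ∪ {a | ∃ p ∈ Δ, a = Xinv p.1 p.2})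

/-- `𝒬_n`: the subalgebra of `𝒜_n` generated by the `y_{ij}^k = x_{ki}⁻¹ x_{kj}`. -/
def Qn (n : ℕ) : Subalgebra ℚ (NCPoly n) :=
  Algebra.adjoin ℚ
    {a : NCPoly n | ∃ i j k : Fin n, i ≠ j ∧ i ≠ k ∧ j ≠ k ∧ a = Xinv k i * X k j}

/-- `𝕌_Δ`: the subgroup of `𝕋_Δ` generated by the `u_{ij}^k = t_{ki}⁻¹ t_{kj}`. -/
def UDelta {n : ℕ} (Δ : Set (Fin n × Fin n)) : Subgroup (TriGroup Δ) :=
  Subgroup.closure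
    {g | ∃ i j k : Fin n, (k, i) ∈ Δ ∧ (k, j) ∈ Δ ∧ g = (tG Δ k i)⁻¹ * tG Δ k j}


/-! ### Auxiliary material for the proof of the noncommutative Laurent phenomenon -/

/-- Numerical version of "the quadruple `(a,b,c,d)` is cyclic". -/
def Cyc4 (a b c d : ℕ) : Prop :=
  (a<b ∧ b<c ∧ c<d) ∨ (b<c ∧ c<d ∧ d<a) ∨ (c<d ∧ d<a ∧ a<b) ∨ (d<a ∧ a<b ∧ b<c)

/-- The (unordered) chord `{u,v}` crosses the chord `{p,q}` in one of the two directions. -/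
def CCd (u v p q : ℕ) : Prop := Cyc4 u p v q ∨ Cyc4 p u q v

def Ins (x u v : ℕ) : Prop := min u v < x ∧ x < max u v

/-- Interval characterization of chord crossing. -/
def CCx (u v p q : ℕ) : Prop :=
  u ≠ v ∧ p ≠ q ∧ p ≠ u ∧ p ≠ v ∧ q ≠ u ∧ q ≠ v ∧
  ((Ins p u v ∧ ¬ Ins q u v) ∨ (Ins q u v ∧ ¬ Ins p u v))

lemma CC_iff {u v p q : ℕ} : CCd u v p q ↔ CCx u v p q := by
  unfold CCd CCx Cyc4 Ins; omega

lemma CCx_symm {u v p q : ℕ} : CCx u v p q ↔ CCx v u p q := by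
  unfold CCx Ins; omega

lemma cyc4_rot {a b c d : ℕ} (h : Cyc4 a b c d) : Cyc4 b c d a := by
  unfold Cyc4 at *; omega

lemma cyc4_ne {a b c d : ℕ} (h : Cyc4 a b c d) :
    a ≠ b ∧ a ≠ c ∧ a ≠ d ∧ b ≠ c ∧ b ≠ d ∧ c ≠ d := by unfold Cyc4 at h; omega

lemma side1 {a i c j p q : ℕ} (H : Cyc4 a i c j) (H1 : ¬CCx a c p q)
    (Hs : CCx i c p q) : CCx i j p q := by unfold CCx Cyc4 Ins at *; omega

lemma side2 {a i c j p q : ℕ} (H : Cyc4 a i c j) (H1 : ¬CCx a c p q)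
    (Hs : CCx a j p q) : CCx i j p q := by unfold CCx Cyc4 Ins at *; omega

lemma side3 {a i c j p q : ℕ} (H : Cyc4 a i c j) (H1 : ¬CCx a c p q)
    (Hs : CCx i a p q) : CCx i j p q := by unfold CCx Cyc4 Ins at *; omega

lemma side4 {a i c j p q : ℕ} (H : Cyc4 a i c j) (H1 : ¬CCx a c p q)
    (Hs : CCx c j p q) : CCx i j p q := by unfold CCx Cyc4 Ins at *; omega

lemma sorted4 {n : ℕ} {w x y z : Fin n} (h1 : w.1 < x.1) (h2 : x.1 < y.1) (h3 : y.1 < z.1) :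
    List.Pairwise (· < ·) [w, x, y, z] := by
  simp only [List.pairwise_cons, List.mem_cons, List.mem_singleton, List.not_mem_nil,
    List.Pairwise.nil, forall_eq_or_imp, forall_eq, Fin.lt_def, and_true, false_implies,
    forall_const, true_and, implies_true]
  omega

lemma nodup4 {n : ℕ} {w x y z : Fin n} (h : w.1 ≠ x.1 ∧ w.1 ≠ y.1 ∧ w.1 ≠ z.1 ∧ x.1 ≠ y.1 ∧
    x.1 ≠ z.1 ∧ y.1 ≠ z.1) : ([w, x, y, z] : List (Fin n)).Nodup := by
  simp only [List.nodup_cons, List.mem_cons, List.mem_singleton, List.not_mem_nil,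
    List.nodup_nil, not_or, Fin.ext_iff, and_true, not_false_iff, true_and, implies_true]
  omega

lemma cyc4_iff {n : ℕ} (a b c d : Fin n) :
    IsCyclicSeq [a, b, c, d] ↔ Cyc4 a.1 b.1 c.1 d.1 := by
  constructor
  · rintro ⟨hnd, k, hs⟩
    have h4 : ([a,b,c,d] : List (Fin n)).length = 4 := rfl
    rw [← List.rotate_mod, h4] at hs
    have hk : k % 4 = 0 ∨ k % 4 = 1 ∨ k % 4 = 2 ∨ k % 4 = 3 := by omega
    rcases hk with h|h|h|h <;> rw [h] at hs <;>
      simp only [List.rotate_cons_succ, List.rotate_zero, List.nil_append, List.cons_append,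
        List.append_nil] at hs <;>
      simp only [List.pairwise_cons, List.mem_cons, List.mem_singleton, List.not_mem_nil,
        List.Pairwise.nil, forall_eq_or_imp, forall_eq, Fin.lt_def, and_true] at hs <;>
      · unfold Cyc4; simp at hs ⊢; omega
  · intro h
    have hd : a.1 ≠ b.1 ∧ a.1 ≠ c.1 ∧ a.1 ≠ d.1 ∧ b.1 ≠ c.1 ∧ b.1 ≠ d.1 ∧ c.1 ≠ d.1 := by
      unfold Cyc4 at h; omega
    refine ⟨nodup4 hd, ?_⟩
    unfold Cyc4 at h
    rcases h with h|h|h|h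
    · exact ⟨0, by rw [List.rotate_zero]; exact sorted4 h.1 h.2.1 h.2.2⟩
    · exact ⟨1, by
        have e : ([a,b,c,d] : List (Fin n)).rotate 1 = [b,c,d,a] := by
          simp [List.rotate_cons_succ]
        rw [e]; exact sorted4 h.1 h.2.1 h.2.2⟩
    · exact ⟨2, by
        have e : ([a,b,c,d] : List (Fin n)).rotate 2 = [c,d,a,b] := by
          simp [List.rotate_cons_succ]
        rw [e]; exact sorted4 h.1 h.2.1 h.2.2⟩
    · exact ⟨3, by
        have e : ([a,b,c,d] : List (Fin n)).rotate 3 = [d,a,b,c] := by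
          simp [List.rotate_cons_succ]
        rw [e]; exact sorted4 h.1 h.2.1 h.2.2⟩

lemma crosses_iff {n : ℕ} (p q : Fin n × Fin n) :
    Crosses p q ↔ Cyc4 p.1.1 q.1.1 p.2.1 q.2.1 :=
  cyc4_iff p.1 q.1 p.2 q.2

/-- If a pair crosses nothing in a triangulation, it belongs to the triangulation. -/
lemma mem_of_nocross {n : ℕ} {Δ : Set (Fin n × Fin n)} (hΔ : IsTriangulation Δ) {i j : Fin n}
    (hij : i ≠ j) (h : ∀ r ∈ Δ, ¬CCx i.1 j.1 r.1.1 r.2.1) : (i, j) ∈ Δ := by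
  have hNC : NonCrossing (insert (i,j) Δ) := by
    constructor
    · intro p hp
      rcases Set.mem_insert_iff.mp hp with rfl|hp
      · exact hij
      · exact hΔ.1.1 _ hp
    · intro p hp q hq
      rcases Set.mem_insert_iff.mp hp with rfl|hp <;>
        rcases Set.mem_insert_iff.mp hq with rfl|hq
      · intro hcr
        exact (CC_iff.mp (Or.inl ((crosses_iff _ _).mp hcr))).2.2.1 rfl
      · intro hcr
        exact h q hq (CC_iff.mp (Or.inl ((crosses_iff _ _).mp hcr)))
      · intro hcr
        exact h p hp (CC_iff.mp (Or.inr ((crosses_iff _ _).mp hcr)))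
      · exact hΔ.1.2 _ hp _ hq
  have := hΔ.2 _ hNC (Set.subset_insert _ _)
  rw [← this]
  exact Set.mem_insert _ _

/-- Triangulations are symmetric sets of chords. -/
lemma mem_symm {n : ℕ} {Δ : Set (Fin n × Fin n)} (hΔ : IsTriangulation Δ) {i j : Fin n}
    (h : (i,j) ∈ Δ) : (j,i) ∈ Δ := by
  have hij : i ≠ j := hΔ.1.1 _ h
  have hNC : NonCrossing (insert (j,i) Δ) := by
    constructor
    · intro p hp
      rcases Set.mem_insert_iff.mp hp with rfl|hp
      · exact hij.symm
      · exact hΔ.1.1 _ hp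
    · intro p hp q hq
      rcases Set.mem_insert_iff.mp hp with rfl|hp <;>
        rcases Set.mem_insert_iff.mp hq with rfl|hq
      · intro hcr
        exact (CC_iff.mp (Or.inl ((crosses_iff _ _).mp hcr))).2.2.1 rfl
      · intro hcr
        have hx : CCx i.1 j.1 q.1.1 q.2.1 :=
          CCx_symm.mp (CC_iff.mp (Or.inl ((crosses_iff _ _).mp hcr)))
        rcases CC_iff.mpr hx with hcy|hcy
        · exact hΔ.1.2 _ h _ hq ((crosses_iff _ _).mpr hcy)
        · exact hΔ.1.2 _ hq _ h ((crosses_iff _ _).mpr hcy)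
      · intro hcr
        have hx : CCx i.1 j.1 p.1.1 p.2.1 :=
          CCx_symm.mp (CC_iff.mp (Or.inr ((crosses_iff _ _).mp hcr)))
        rcases CC_iff.mpr hx with hcy|hcy
        · exact hΔ.1.2 _ h _ hp ((crosses_iff _ _).mpr hcy)
        · exact hΔ.1.2 _ hp _ h ((crosses_iff _ _).mpr hcy)
      · exact hΔ.1.2 _ hp _ hq
  have := hΔ.2 _ hNC (Set.subset_insert _ _)
  rw [← this]
  exact Set.mem_insert _ _

/-- The exchange relation holds in `𝒜_n`. -/
lemma X_exchange {n : ℕ} {i j k l : Fin n} (h : IsCyclicSeq [i, j, k, l]) :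
    X j l = X j k * Xinv i k * X i l + X j i * Xinv k i * X k l := by
  have h2 := RingQuot.mkAlgHom_rel ℚ (ARel.exchange h)
  simpa only [X, Xinv, map_add, map_mul] using h2

/-- The set of chords of `Δ` crossed by the chord `(u,v)`. -/
def crossSet {n : ℕ} (Δ : Set (Fin n × Fin n)) (u v : Fin n) : Set (Fin n × Fin n) :=
  {r : Fin n × Fin n | r ∈ Δ ∧ CCx u.1 v.1 r.1.1 r.2.1}

lemma crossSet_lt {n : ℕ} {Δ : Set (Fin n × Fin n)} (hΔ : IsTriangulation Δ)
    {a c i j u v : Fin n} (hac : (a,c) ∈ Δ)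
    (hCC : CCx i.1 j.1 a.1 c.1) (hno : ¬CCx u.1 v.1 a.1 c.1)
    (himp : ∀ p q : ℕ, ¬CCx a.1 c.1 p q → CCx u.1 v.1 p q → CCx i.1 j.1 p q) :
    (crossSet Δ u v).ncard < (crossSet Δ i j).ncard := by
  apply Set.ncard_lt_ncard ?_ (Set.toFinite _)
  constructor
  · rintro ⟨p, q⟩ ⟨hm, hcc⟩
    refine ⟨hm, himp _ _ ?_ hcc⟩
    intro hx
    rcases CC_iff.mpr hx with hcy | hcy
    · exact hΔ.1.2 _ hac _ hm ((crosses_iff _ _).mpr hcy)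
    · exact hΔ.1.2 _ hm _ hac ((crosses_iff _ _).mpr hcy)
  · intro hsub
    exact hno (hsub ⟨hac, hCC⟩).2


/-- **Noncommutative Laurent Phenomenon.** For every triangulation `Δ` of
`[n]` and all distinct `i, j`, the element `x_{ij}` lies in the subalgebra of `𝒜_n`
generated by the `x_{kl}` and `x_{kl}⁻¹` with `(k,l) ∈ Δ`. -/
theorem noncommutative_laurent (n : ℕ) (hn : 2 ≤ n) (Δ : Set (Fin n × Fin n))
    (hΔ : IsTriangulation Δ) (i j : Fin n) (hij : i ≠ j) :
    X i j ∈ Algebra.adjoin ℚ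
      (({a | ∃ p ∈ Δ, a = X p.1 p.2} ∪ {a | ∃ p ∈ Δ, a = Xinv p.1 p.2}) :
        Set (NCPoly n)) := by
  classical
  suffices H : ∀ N : ℕ, ∀ u v : Fin n, u ≠ v → (crossSet Δ u v).ncard ≤ N →
      X u v ∈ Algebra.adjoin ℚ
        (({a | ∃ p ∈ Δ, a = X p.1 p.2} ∪ {a | ∃ p ∈ Δ, a = Xinv p.1 p.2}) :
          Set (NCPoly n)) by
    exact H _ i j hij le_rfl
  intro N
  induction N with
  | zero =>
    intro u v huv hc
    have h0 : (crossSet Δ u v).ncard = 0 := by omega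
    have hempty : crossSet Δ u v = ∅ := (Set.ncard_eq_zero (Set.toFinite _)).mp h0
    have hmem : (u, v) ∈ Δ := mem_of_nocross hΔ huv (fun r hr hcc =>
      (Set.eq_empty_iff_forall_notMem.mp hempty r) ⟨hr, hcc⟩)
    exact Algebra.subset_adjoin (Set.mem_union_left _ ⟨(u, v), hmem, rfl⟩)
  | succ N ih =>
    intro u v huv hc
    by_cases h0 : (crossSet Δ u v).ncard ≤ N
    · exact ih u v huv h0
    have hne : (crossSet Δ u v).Nonempty := Set.nonempty_of_ncard_ne_zero (by omega)
    obtain ⟨⟨k, l⟩, hklΔ, hccx⟩ := hne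
    obtain ⟨a, c, hac, hca, hcyc⟩ :
        ∃ a c : Fin n, (a, c) ∈ Δ ∧ (c, a) ∈ Δ ∧ Cyc4 a.1 u.1 c.1 v.1 := by
      rcases CC_iff.mpr hccx with hcy | hcy
      · exact ⟨l, k, mem_symm hΔ hklΔ, hklΔ, cyc4_rot (cyc4_rot (cyc4_rot hcy))⟩
      · exact ⟨k, l, hklΔ, mem_symm hΔ hklΔ, hcy⟩
    have hd := cyc4_ne hcyc
    have hCCac : CCx u.1 v.1 a.1 c.1 := CC_iff.mp (Or.inr hcyc)
    have key : ∀ w z : Fin n, w ≠ z → (crossSet Δ w z).ncard < (crossSet Δ u v).ncard →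
        X w z ∈ Algebra.adjoin ℚ
          (({a | ∃ p ∈ Δ, a = X p.1 p.2} ∪ {a | ∃ p ∈ Δ, a = Xinv p.1 p.2}) :
            Set (NCPoly n)) := by
      intro w z hwz hlt
      exact ih w z hwz (by omega)
    have m_uc := key u c (Fin.ne_of_val_ne hd.2.2.2.1)
      (crossSet_lt hΔ hac hCCac (fun hx => hx.2.2.2.2.2.1 rfl)
        (fun p q h1 h2 => side1 hcyc h1 h2))
    have m_av := key a v (Fin.ne_of_val_ne hd.2.2.1)
      (crossSet_lt hΔ hac hCCac (fun hx => hx.2.2.1 rfl)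
        (fun p q h1 h2 => side2 hcyc h1 h2))
    have m_ua := key u a (Fin.ne_of_val_ne hd.1.symm)
      (crossSet_lt hΔ hac hCCac (fun hx => hx.2.2.2.1 rfl)
        (fun p q h1 h2 => side3 hcyc h1 h2))
    have m_cv := key c v (Fin.ne_of_val_ne hd.2.2.2.2.2)
      (crossSet_lt hΔ hac hCCac (fun hx => hx.2.2.2.2.1 rfl)
        (fun p q h1 h2 => side4 hcyc h1 h2))
    have hinv_ac : Xinv a c ∈ Algebra.adjoin ℚ
        (({a | ∃ p ∈ Δ, a = X p.1 p.2} ∪ {a | ∃ p ∈ Δ, a = Xinv p.1 p.2}) :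
          Set (NCPoly n)) :=
      Algebra.subset_adjoin (Set.mem_union_right _ ⟨(a, c), hac, rfl⟩)
    have hinv_ca : Xinv c a ∈ Algebra.adjoin ℚ
        (({a | ∃ p ∈ Δ, a = X p.1 p.2} ∪ {a | ∃ p ∈ Δ, a = Xinv p.1 p.2}) :
          Set (NCPoly n)) :=
      Algebra.subset_adjoin (Set.mem_union_right _ ⟨(c, a), hca, rfl⟩)
    have hcys : IsCyclicSeq [a, u, c, v] := (cyc4_iff a u c v).mpr hcyc
    rw [X_exchange hcys]
    exact add_mem (mul_mem (mul_mem m_uc hinv_ac) m_av)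
      (mul_mem (mul_mem m_ua hinv_ca) m_cv)


end NCPolygon
end
end

section
/- (Noncommutative polynomial phenomenon, qualitative form.) Let n ≥ 3 and let Δ be a triangulation of [n]. Let 𝒬_Δ be the ℚ-subalgebra of 𝒜_n generated by the elements y_{ij}^k := x_{ki}⁻¹x_{kj} for all triples of distinct i,j,k ∈ [n] with (i,k) ∈ Δ and (k,j) ∈ Δ. Then for every triple (i,j,k) of distinct indices in [n] with (i,k) ∈ Δ, the element y_{kj}^i = x_{ik}⁻¹x_{ij} belongs to 𝒬_Δ. -/
open scoped Classical

noncomputable section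

namespace NCPolygon

/-! ### Auxiliary development -/

section Aux

variable {n : ℕ}

def pos (a b : Fin n) : ℕ := (b.1 + (n - a.1)) % n

lemma pos_def (a b : Fin n) :
    pos a b = if a.1 ≤ b.1 then b.1 - a.1 else b.1 + n - a.1 := by
  have ha := a.isLt; have hb := b.isLt
  unfold pos
  rcases le_or_gt a.1 b.1 with h | h
  · rw [if_pos h]
    have e : b.1 + (n - a.1) = (b.1 - a.1) + n := by omega
    rw [e, Nat.add_mod_right, Nat.mod_eq_of_lt (by omega)]
  · rw [if_neg (by omega)]
    have e : b.1 + (n - a.1) = b.1 + n - a.1 := by omega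
    rw [e, Nat.mod_eq_of_lt (by omega)]

lemma pos_self (a : Fin n) : pos a a = 0 := by
  rw [pos_def]; simp

lemma pos_lt (a b : Fin n) : pos a b < n := by
  have ha := a.isLt; have hb := b.isLt
  rw [pos_def]; split_ifs <;> omega

lemma pos_pos {a b : Fin n} (h : a ≠ b) : 0 < pos a b := by
  have ha := a.isLt; have hb := b.isLt
  have : a.1 ≠ b.1 := fun e => h (Fin.ext e)
  rw [pos_def]; split_ifs <;> omega

lemma eq_of_pos_eq_zero {a b : Fin n} (h : pos a b = 0) : a = b := by
  by_contra hne; exact absurd h (pos_pos hne).ne'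

lemma pos_inj {a b c : Fin n} (h : pos a b = pos a c) : b = c := by
  have ha := a.isLt; have hb := b.isLt; have hc := c.isLt
  rw [pos_def, pos_def] at h
  apply Fin.ext
  split_ifs at h <;> omega

lemma pos_add_pos (a b c : Fin n) :
    pos a b + pos b c = pos a c ∨ pos a b + pos b c = pos a c + n := by
  have ha := a.isLt; have hb := b.isLt; have hc := c.isLt
  rw [pos_def, pos_def, pos_def]
  split_ifs <;> omega

lemma rotate_add_length {α : Type*} (l : List α) (k : ℕ) :
    l.rotate (k + l.length) = l.rotate k := by
  rw [← List.rotate_rotate]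
  have h : l.length = (l.rotate k).length := (List.length_rotate l k).symm
  rw [h, List.rotate_length]

lemma IsCyclicSeq.rot {l : List (Fin n)} (h : IsCyclicSeq l) (m : ℕ) :
    IsCyclicSeq (l.rotate m) := by
  obtain ⟨h1, k, h2⟩ := h
  refine ⟨(List.rotate_perm l m).nodup_iff.mpr h1, ?_⟩
  rcases Nat.eq_zero_or_pos l.length with hL | hL
  · rw [List.eq_nil_of_length_eq_zero hL] at *
    exact ⟨k, by simpa using h2⟩
  · refine ⟨l.length - m % l.length + k, ?_⟩
    rw [← List.rotate_mod l m, List.rotate_rotate]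
    have hm : m % l.length < l.length := Nat.mod_lt _ hL
    have e : m % l.length + (l.length - m % l.length + k) = k + l.length := by omega
    rw [e, rotate_add_length]
    exact h2


lemma ne_of_pos_lt {a b c : Fin n} (h : pos a b < pos a c) : b ≠ c :=
  fun e => by subst e; exact lt_irrefl _ h

lemma cyclic4_of_pos {a b c d : Fin n} (h1 : 0 < pos a b) (h2 : pos a b < pos a c)
    (h3 : pos a c < pos a d) : IsCyclicSeq [a, b, c, d] := by
  have ha := a.isLt; have hb := b.isLt; have hc := c.isLt; have hd := d.isLt
  have hab : a ≠ b := fun e => by subst e; simp [pos_self] at h1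
  have hac : a ≠ c := fun e => by subst e; simp [pos_self] at h2
  have had : a ≠ d := fun e => by subst e; simp [pos_self] at h3
  have hbc : b ≠ c := ne_of_pos_lt h2
  have hbd : b ≠ d := ne_of_pos_lt (h2.trans h3)
  have hcd : c ≠ d := ne_of_pos_lt h3
  have hnd : ([a, b, c, d] : List (Fin n)).Nodup := by
    simp [List.nodup_cons, hab, hac, had, hbc, hbd, hcd]
  have eb := pos_def a b; have ec := pos_def a c; have ed := pos_def a d
  refine ⟨hnd, ?_⟩
  by_cases wb : b.1 < a.1
  · -- b, c, d all wrapped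
    refine ⟨1, ?_⟩
    show List.Pairwise _ [b, c, d, a]
    simp only [List.pairwise_cons, List.mem_cons, List.not_mem_nil, List.Pairwise.nil,
      forall_eq_or_imp, forall_eq, Fin.lt_def, false_implies, forall_const, and_true,
      true_and, implies_true]
    split_ifs at eb ec ed <;> omega
  · by_cases wc : c.1 < a.1
    · refine ⟨2, ?_⟩
      show List.Pairwise _ [c, d, a, b]
      simp only [List.pairwise_cons, List.mem_cons, List.not_mem_nil, List.Pairwise.nil,
        forall_eq_or_imp, forall_eq, Fin.lt_def, false_implies, forall_const, and_true,
          true_and, implies_true]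
      split_ifs at eb ec ed <;> omega
    · by_cases wd : d.1 < a.1
      · refine ⟨3, ?_⟩
        show List.Pairwise _ [d, a, b, c]
        simp only [List.pairwise_cons, List.mem_cons, List.not_mem_nil, List.Pairwise.nil,
          forall_eq_or_imp, forall_eq, Fin.lt_def, false_implies, forall_const, and_true,
          true_and, implies_true]
        split_ifs at eb ec ed <;> omega
      · refine ⟨0, ?_⟩
        show List.Pairwise _ [a, b, c, d]
        simp only [List.pairwise_cons, List.mem_cons, List.not_mem_nil, List.Pairwise.nil,
          forall_eq_or_imp, forall_eq, Fin.lt_def, false_implies, forall_const, and_true,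
          true_and, implies_true]
        split_ifs at eb ec ed <;> omega

lemma pos_of_cyclic4 {a b c d : Fin n} (h : IsCyclicSeq [a, b, c, d]) :
    0 < pos a b ∧ pos a b < pos a c ∧ pos a c < pos a d := by
  have ha := a.isLt; have hb := b.isLt; have hc := c.isLt; have hd := d.isLt
  obtain ⟨hnd, k, hs⟩ := h
  simp only [List.nodup_cons, List.mem_cons, List.not_mem_nil, or_false,
    List.nodup_nil, and_true, not_or] at hnd
  obtain ⟨⟨hab, hac, had⟩, ⟨hbc, hbd⟩, hcd, -⟩ := hnd
  have hab' : a.1 ≠ b.1 := fun e => hab (Fin.ext e)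
  have hac' : a.1 ≠ c.1 := fun e => hac (Fin.ext e)
  have had' : a.1 ≠ d.1 := fun e => had (Fin.ext e)
  have hbc' : b.1 ≠ c.1 := fun e => hbc (Fin.ext e)
  have hbd' : b.1 ≠ d.1 := fun e => hbd (Fin.ext e)
  have hcd' : c.1 ≠ d.1 := fun e => hcd (Fin.ext e)
  have eb := pos_def a b; have ec := pos_def a c; have ed := pos_def a d
  rw [← List.rotate_mod] at hs
  have hlen : ([a, b, c, d] : List (Fin n)).length = 4 := rfl
  rw [hlen] at hs
  have h4 : k % 4 = 0 ∨ k % 4 = 1 ∨ k % 4 = 2 ∨ k % 4 = 3 := by omega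
  rcases h4 with e | e | e | e <;> rw [e] at hs
  · have : List.Pairwise (· < ·) [a, b, c, d] := hs
    simp only [List.pairwise_cons, List.mem_cons, List.not_mem_nil, List.Pairwise.nil,
      forall_eq_or_imp, forall_eq, Fin.lt_def, false_implies, forall_const, and_true,
      true_and, implies_true] at this
    split_ifs at eb ec ed <;> omega
  · have : List.Pairwise (· < ·) [b, c, d, a] := hs
    simp only [List.pairwise_cons, List.mem_cons, List.not_mem_nil, List.Pairwise.nil,
      forall_eq_or_imp, forall_eq, Fin.lt_def, false_implies, forall_const, and_true,
      true_and, implies_true] at this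
    split_ifs at eb ec ed <;> omega
  · have : List.Pairwise (· < ·) [c, d, a, b] := hs
    simp only [List.pairwise_cons, List.mem_cons, List.not_mem_nil, List.Pairwise.nil,
      forall_eq_or_imp, forall_eq, Fin.lt_def, false_implies, forall_const, and_true,
      true_and, implies_true] at this
    split_ifs at eb ec ed <;> omega
  · have : List.Pairwise (· < ·) [d, a, b, c] := hs
    simp only [List.pairwise_cons, List.mem_cons, List.not_mem_nil, List.Pairwise.nil,
      forall_eq_or_imp, forall_eq, Fin.lt_def, false_implies, forall_const, and_true,
      true_and, implies_true] at this
    split_ifs at eb ec ed <;> omega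

-- rotations of explicit 4-lists
lemma cyc_rot1 {a b c d : Fin n} (h : IsCyclicSeq [a, b, c, d]) : IsCyclicSeq [b, c, d, a] :=
  h.rot 1
lemma cyc_rot3 {a b c d : Fin n} (h : IsCyclicSeq [a, b, c, d]) : IsCyclicSeq [d, a, b, c] :=
  h.rot 3

/-- Symmetry of a triangulation. -/
lemma symm_mem {Δ : Set (Fin n × Fin n)} (hΔ : IsTriangulation Δ) {i j : Fin n}
    (h : (i, j) ∈ Δ) : (j, i) ∈ Δ := by
  obtain ⟨⟨hne, hcr⟩, hmax⟩ := hΔ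
  have hij : i ≠ j := hne _ h
  have key : NonCrossing (insert (j, i) Δ) := by
    constructor
    · rintro p (rfl | hp)
      · exact hij.symm
      · exact hne _ hp
    · rintro p (rfl | hp) q (rfl | hq)
      · intro hc
        have := hc.1
        simp at this
      · intro hc
        exact hcr q hq (i, j) h (cyc_rot1 hc)
      · intro hc
        exact hcr (i, j) h p hp (cyc_rot3 hc)
      · exact hcr p hp q hq
  have := hmax _ key (Set.subset_insert _ _)
  rw [← this]
  exact Set.mem_insert _ _

/-- Edges at cyclic distance one belong to any triangulation. -/
lemma edge_mem {Δ : Set (Fin n × Fin n)} (hΔ : IsTriangulation Δ) {a b : Fin n}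
    (h1 : pos a b = 1) : (a, b) ∈ Δ := by
  obtain ⟨⟨hne, hcr⟩, hmax⟩ := hΔ
  have hab : a ≠ b := fun e => by subst e; rw [pos_self] at h1; omega
  have key : NonCrossing (insert (a, b) Δ) := by
    constructor
    · rintro p (rfl | hp)
      · exact hab
      · exact hne _ hp
    · rintro p (rfl | hp) q (rfl | hq)
      · intro hc
        have := hc.1
        simp at this
      · intro hc
        have hc' : IsCyclicSeq [a, q.1, b, q.2] := hc
        obtain ⟨u1, u2, -⟩ := pos_of_cyclic4 hc'
        omega
      · intro hc
        have hc' : IsCyclicSeq [p.1, a, p.2, b] := hc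
        obtain ⟨u1, u2, -⟩ := pos_of_cyclic4 (cyc_rot1 hc')
        omega
      · exact hcr p hp q hq
  have := hmax _ key (Set.subset_insert _ _)
  rw [← this]
  exact Set.mem_insert _ _

/-- The ear/triangle lemma: every chord with a vertex strictly inside the arc `a → b`
is the base of a triangle of the triangulation on that side. -/
lemma ear {Δ : Set (Fin n × Fin n)} (hΔ : IsTriangulation Δ) {a b j : Fin n}
    (hab : (a, b) ∈ Δ) (hj1 : 0 < pos a j) (hj2 : pos a j < pos a b) :
    ∃ m, 0 < pos a m ∧ pos a m < pos a b ∧ (a, m) ∈ Δ ∧ (m, b) ∈ Δ := by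
  have hposn := pos_lt a b
  have hn : 0 < n := lt_of_le_of_lt (Nat.zero_le _) hposn
  -- the successor of a
  set s : Fin n := ⟨(a.1 + 1) % n, Nat.mod_lt _ hn⟩ with hs
  have hpos_s : pos a s = 1 := by
    have ha := a.isLt
    have hv : s.1 = (a.1 + 1) % n := rfl
    rw [pos_def]
    rcases Nat.lt_or_ge (a.1 + 1) n with h | h
    · rw [hv]; rw [Nat.mod_eq_of_lt h]; split_ifs <;> omega
    · have hn1 : a.1 + 1 = n := by omega
      have : s.1 = 0 := by rw [hv, hn1, Nat.mod_self]
      rw [this]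
      split_ifs <;> omega
  classical
  set C : Finset (Fin n) :=
    Finset.univ.filter (fun m => 0 < pos a m ∧ pos a m < pos a b ∧ (a, m) ∈ Δ) with hC
  have hsC : s ∈ C := by
    rw [hC, Finset.mem_filter]
    refine ⟨Finset.mem_univ _, by omega, by omega, edge_mem hΔ hpos_s⟩
  obtain ⟨m, hmC, hmax'⟩ := Finset.exists_max_image C (fun m => pos a m) ⟨s, hsC⟩
  rw [hC, Finset.mem_filter] at hmC
  obtain ⟨-, hm1, hm2, hamΔ⟩ := hmC
  refine ⟨m, hm1, hm2, hamΔ, ?_⟩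
  by_contra hmb
  obtain ⟨⟨hne, hcr⟩, hmax⟩ := hΔ
  have hmbne : m ≠ b := fun e => by subst e; omega
  -- helper : no chord of Δ crosses (m, b)
  have helper : ∀ c d : Fin n, (c, d) ∈ Δ → (d, c) ∈ Δ →
      IsCyclicSeq [m, c, b, d] → False := by
    intro c d hcd hdc hcyc
    obtain ⟨q1, q2, q3⟩ := pos_of_cyclic4 hcyc
    have hposc := pos_lt m c
    have hposd := pos_lt m d
    have hposac := pos_lt a c
    have hposad := pos_lt a d
    -- translate to base a
    have hb' : pos m b = pos a b - pos a m := by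
      rcases pos_add_pos a m b with h | h <;> omega
    have hc' : pos a c = pos a m + pos m c := by
      rcases pos_add_pos a m c with h | h <;> omega
    have hd' : pos a m + pos m d = pos a d ∨ pos a m + pos m d = pos a d + n := pos_add_pos a m d
    rcases hd' with hd' | hd'
    · -- pos a d > pos a b : chord (c,d) crosses (a,b)
      have : IsCyclicSeq [a, c, b, d] := cyclic4_of_pos (by omega) (by omega) (by omega)
      exact hcr (a, b) hab (c, d) hcd this
    · -- pos a d < pos a m
      rcases Nat.eq_zero_or_pos (pos a d) with hd0 | hd0
      · -- d = a , so (a, c) ∈ Δ with pos a c > pos a m : contradicts maximality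
        have : d = a := (eq_of_pos_eq_zero hd0).symm
        subst this
        have hcC : c ∈ C := by
          rw [hC, Finset.mem_filter]
          exact ⟨Finset.mem_univ _, by omega, by omega, hdc⟩
        have := hmax' c hcC
        omega
      · -- 0 < pos a d < pos a m : chord (d,c) crosses (a,m)
        have : IsCyclicSeq [a, d, m, c] := cyclic4_of_pos (by omega) (by omega) (by omega)
        exact hcr (a, m) hamΔ (d, c) hdc this
  have hΔsymm : IsTriangulation Δ := ⟨⟨hne, hcr⟩, hmax⟩
  have key : NonCrossing (insert (m, b) Δ) := by
    constructor
    · rintro p (rfl | hp)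
      · exact hmbne
      · exact hne _ hp
    · rintro p (rfl | hp) q (rfl | hq)
      · intro hc
        have := hc.1
        simp at this
      · intro hc
        have hc' : IsCyclicSeq [m, q.1, b, q.2] := hc
        exact helper q.1 q.2 hq (symm_mem hΔsymm hq) hc'
      · intro hc
        have hc' : IsCyclicSeq [p.1, m, p.2, b] := hc
        exact helper p.2 p.1 (symm_mem hΔsymm hp) hp (cyc_rot1 hc')
      · exact hcr p hp q hq
  have := hmax _ key (Set.subset_insert _ _)
  apply hmb
  rw [← this]
  exact Set.mem_insert _ _

-- C1
lemma X_mul_Xinv {i j : Fin n} (h : i ≠ j) : X i j * Xinv i j = 1 := by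
  have := RingQuot.mkAlgHom_rel ℚ (ARel.mul_inv h)
  rw [map_mul] at this
  rw [X, Xinv, this, map_one]

lemma Xinv_mul_X {i j : Fin n} (h : i ≠ j) : Xinv i j * X i j = 1 := by
  have := RingQuot.mkAlgHom_rel ℚ (ARel.inv_mul h)
  rw [map_mul] at this
  rw [X, Xinv, this, map_one]

-- C2
lemma exchange_eq {a b c d : Fin n} (h : IsCyclicSeq [a, b, c, d]) :
    X b d = X b c * Xinv a c * X a d + X b a * Xinv c a * X c d := by
  have := RingQuot.mkAlgHom_rel ℚ (ARel.exchange h)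
  simp only [map_add, map_mul] at this
  rw [X, Xinv, X, Xinv, X, X, X]
  exact this

-- E1
lemma factor_eq {a b j m : Fin n} (ham : a ≠ m) :
    Xinv a b * X a j = (Xinv a b * X a m) * (Xinv a m * X a j) := by
  have h := X_mul_Xinv ham
  calc Xinv a b * X a j = Xinv a b * ((X a m * Xinv a m) * X a j) := by rw [h, one_mul]
    _ = (Xinv a b * X a m) * (Xinv a m * X a j) := by noncomm_ring

-- E2
lemma sum_eq {a b j m : Fin n} (hab : a ≠ b)
    (hexch : X a j = X a m * Xinv b m * X b j + X a b * Xinv m b * X m j) :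
    Xinv a b * X a j = (Xinv a b * X a m) * (Xinv b m * X b j) + Xinv m b * X m j := by
  have h := Xinv_mul_X hab
  rw [hexch, mul_add]
  congr 1
  · noncomm_ring
  · calc Xinv a b * (X a b * Xinv m b * X m j)
        = (Xinv a b * X a b) * (Xinv m b * X m j) := by noncomm_ring
      _ = Xinv m b * X m j := by rw [h, one_mul]

def genSet (Δ : Set (Fin n × Fin n)) : Set (NCPoly n) :=
  {a : NCPoly n | ∃ p q r : Fin n, p ≠ q ∧ p ≠ r ∧ q ≠ r ∧
    (p, r) ∈ Δ ∧ (r, q) ∈ Δ ∧ a = Xinv r p * X r q}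

lemma gen_mem {Δ : Set (Fin n × Fin n)} {p q r : Fin n} (hpq : p ≠ q) (hpr : p ≠ r)
    (hqr : q ≠ r) (h1 : (p, r) ∈ Δ) (h2 : (r, q) ∈ Δ) :
    Xinv r p * X r q ∈ Algebra.adjoin ℚ (genSet Δ) :=
  Algebra.subset_adjoin ⟨p, q, r, hpq, hpr, hqr, h1, h2, rfl⟩

lemma main {Δ : Set (Fin n × Fin n)} (hΔ : IsTriangulation Δ) (d : ℕ) :
    ∀ a b j : Fin n, a ≠ b → a ≠ j → b ≠ j → (a, b) ∈ Δ →
    (if pos a j < pos a b then pos a b else pos b a) ≤ d →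
    Xinv a b * X a j ∈ Algebra.adjoin ℚ (genSet Δ) := by
  induction d with
  | zero =>
    intro a b j hab haj hbj _ hd
    have h1 := pos_pos hab
    have h2 := pos_pos hab.symm
    split_ifs at hd <;> omega
  | succ d ih =>
    intro a b j hab haj hbj habΔ hd
    have hba : (b, a) ∈ Δ := symm_mem hΔ habΔ
    have hja : 0 < pos a j := pos_pos haj
    have hjb : 0 < pos b j := pos_pos hbj
    have hab' : 0 < pos a b := pos_pos hab
    have hba' : 0 < pos b a := pos_pos hab.symm
    have hsum : pos a b + pos b a = n := by
      rcases pos_add_pos a b a with h | h <;> rw [pos_self] at h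
      · have := pos_pos hab; omega
      · omega
    have hlt_ab := pos_lt a b
    have hlt_aj := pos_lt a j
    have hlt_ba := pos_lt b a
    have hlt_bj := pos_lt b j
    have hne_jb : pos a j ≠ pos a b := fun e => hbj (pos_inj e).symm
    by_cases hside : pos a j < pos a b
    · -- j on the arc a → b
      rw [if_pos hside] at hd
      obtain ⟨m, hm1, hm2, ham, hmb⟩ := ear hΔ habΔ hja hside
      have hamne : a ≠ m := fun e => by subst e; rw [pos_self] at hm1; omega
      have hbm : (b, m) ∈ Δ := symm_mem hΔ hmb
      have ham' : (m, a) ∈ Δ := symm_mem hΔ ham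
      have hmbne : m ≠ b := fun e => by subst e; omega
      have hlt_am := pos_lt a m
      have hlt_mb := pos_lt m b
      have hlt_mj := pos_lt m j
      have e_amb : pos a m + pos m b = pos a b := by
        rcases pos_add_pos a m b with h | h <;> omega
      rcases lt_trichotomy (pos a j) (pos a m) with hcase | hcase | hcase
      · -- j in arc (a, m) : factor through m
        have hjm : j ≠ m := fun e => by subst e; omega
        rw [factor_eq hamne]
        refine mul_mem (gen_mem ?_ hab.symm hamne.symm hba ham)
          (ih a m j hamne haj hjm.symm ham ?_)
        · exact fun e => by rw [e] at hm2; omega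
        · rw [if_pos hcase]; omega
      · -- j = m : generator
        have : j = m := pos_inj hcase
        subst this
        exact gen_mem hbj hab.symm haj.symm hba ham
      · -- j in arc (m, b) : exchange
        have hjm : m ≠ j := fun e => by subst e; omega
        have e_amj : pos a m + pos m j = pos a j := by
          rcases pos_add_pos a m j with h | h <;> omega
        have e_abm : pos a b + pos b m = pos a m + n := by
          rcases pos_add_pos a b m with h | h <;> omega
        have e_abj : pos a b + pos b j = pos a j + n := by
          rcases pos_add_pos a b j with h | h <;> omega
        have hcyc : IsCyclicSeq [b, a, m, j] := by
          have h0 : IsCyclicSeq [a, m, j, b] := cyclic4_of_pos hm1 hcase hside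
          exact h0.rot 3
        rw [sum_eq hab (exchange_eq hcyc)]
        refine add_mem (mul_mem (gen_mem ?_ hab.symm hamne.symm hba ham)
          (ih b m j hmbne.symm hbj hjm hbm ?_)) (ih m b j hmbne hjm hbj hmb ?_)
        · exact fun e => by rw [e] at hm2; omega
        · rw [if_neg (by omega)]; omega
        · rw [if_pos (by omega)]; omega
    · -- j on the arc b → a
      have hside' : pos a b < pos a j := by omega
      rw [if_neg hside] at hd
      have e_abj : pos a b + pos b j = pos a j := by
        rcases pos_add_pos a b j with h | h <;> omega
      have hbj2 : pos b j < pos b a := by omega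
      obtain ⟨m, hm1, hm2, hbm, hma⟩ := ear hΔ hba hjb hbj2
      have hbmne : b ≠ m := fun e => by subst e; rw [pos_self] at hm1; omega
      have hmane : m ≠ a := fun e => by subst e; omega
      have ham : (a, m) ∈ Δ := symm_mem hΔ hma
      have hmb : (m, b) ∈ Δ := symm_mem hΔ hbm
      have hlt_bm := pos_lt b m
      have hlt_am := pos_lt a m
      have hlt_mj := pos_lt m j
      have hlt_mb := pos_lt m b
      have hlt_ma := pos_lt m a
      have e_abm : pos a b + pos b m = pos a m := by
        rcases pos_add_pos a b m with h | h <;> omega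
      have e_bma : pos b m + pos m a = pos b a := by
        rcases pos_add_pos b m a with h | h <;> omega
      rcases lt_trichotomy (pos b j) (pos b m) with hcase | hcase | hcase
      · -- j in arc (b, m) : exchange
        have hjm : m ≠ j := fun e => by subst e; omega
        have e_bmb : pos b m + pos m b = n := by
          rcases pos_add_pos b m b with h | h <;> rw [pos_self] at h <;> omega
        have e_mbj : pos m b + pos b j = pos m j := by
          rcases pos_add_pos m b j with h | h <;> omega
        have hcyc : IsCyclicSeq [m, a, b, j] := by
          have h0 : IsCyclicSeq [a, b, j, m] := cyclic4_of_pos hab' hside' (by omega)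
          exact h0.rot 3
        have hex := exchange_eq hcyc
        rw [sum_eq (m := m) hab (by rw [hex]; exact add_comm _ _)]
        refine add_mem (mul_mem (gen_mem ?_ hab.symm hmane ?_ ham)
          (ih b m j hbmne hbj hjm hbm ?_)) (ih m b j hbmne.symm hjm hbj hmb ?_)
        · exact fun e => by rw [e] at e_abm; omega
        · exact hba
        · rw [if_pos hcase]; omega
        · rw [if_neg (by omega)]; omega
      · -- j = m : generator
        have : j = m := pos_inj hcase
        subst this
        exact gen_mem hbj hab.symm haj.symm hba ham
      · -- j in arc (m, a) : factor through m
        have hjm : m ≠ j := fun e => by subst e; omega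
        have e_abj2 : pos a j = pos a b + pos b j := e_abj.symm
        have e_ama : pos a m + pos m a = n := by
          rcases pos_add_pos a m a with h | h <;> rw [pos_self] at h <;> omega
        rw [factor_eq hmane.symm]
        refine mul_mem (gen_mem hbmne hab.symm hmane ?_ ham)
          (ih a m j hmane.symm haj hjm ham ?_)
        · exact hba
        · rw [if_neg (by omega)]; omega


end Aux

/-- **Noncommutative polynomial phenomenon.** Let `𝒬_Δ` be the subalgebra
of `𝒜_n` generated by the `y_{pq}^r = x_{rp}⁻¹ x_{rq}` with `(p,r), (r,q) ∈ Δ`. Then for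
distinct `i, j, k` with `(i,k) ∈ Δ`, the element `y_{kj}^i = x_{ik}⁻¹ x_{ij}` lies
in `𝒬_Δ`. -/
theorem noncommutative_polynomial (n : ℕ) (hn : 3 ≤ n) (Δ : Set (Fin n × Fin n))
    (hΔ : IsTriangulation Δ) (i j k : Fin n)
    (hij : i ≠ j) (hik : i ≠ k) (hjk : j ≠ k) (hikΔ : (i, k) ∈ Δ) :
    Xinv i k * X i j ∈ Algebra.adjoin ℚ
      {a : NCPoly n | ∃ p q r : Fin n, p ≠ q ∧ p ≠ r ∧ q ≠ r ∧
        (p, r) ∈ Δ ∧ (r, q) ∈ Δ ∧ a = Xinv r p * X r q} := by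
  show Xinv i k * X i j ∈ Algebra.adjoin ℚ (genSet Δ)
  exact main hΔ _ i k j hik hij hjk.symm hikΔ le_rfl

end NCPolygon
end
end
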